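/- (Hahn–Banach theorem for groups) Let X be an additive commutative group, X' ⊆ X a subgroup, f : X → ℝ an ℕ-sublinear function, and h : X' → ℝ an additive function with h(x) ≤ f(x) for all x ∈ X'. Then there exists an additive function h̄ : X → ℝ such that h̄(x) = h(x) for all x ∈ X' and h̄(x) ≤ f(x) for all x ∈ X. -/

import Mathlib

open LinearPMap Submodule

private theorem hb_step {X : Type*} [AddCommGroup X]
    (f : X → ℝ)
    (hsub : ∀ x y, f (x + y) ≤ f x + f y)
    (hhom : ∀ (m : ℕ) (x : X), f (m • x) = (m : ℝ) * f x)
    (g : X →ₗ.[ℤ] ℝ) (hgf : ∀ z : g.domain, g z ≤ f z)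
    (x : X) (hx : x ∉ g.domain) :
    ∃ g' : X →ₗ.[ℤ] ℝ, g ≤ g' ∧ x ∈ g'.domain ∧ ∀ z : g'.domain, g' z ≤ f z := by
  classical
  have fz : ∀ (n : ℤ), 0 ≤ n → ∀ v : X, f (n • v) = (n : ℝ) * f v := by
    intro n hn v
    lift n to ℕ using hn
    rw [natCast_zsmul, hhom]
    push_cast; ring
  have gval : ∀ {u v : X} (hu : u ∈ g.domain) (hv : v ∈ g.domain), u = v →
      g ⟨u, hu⟩ = g ⟨v, hv⟩ := by
    intro u v hu hv e; subst e; rfl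
  have gsmul : ∀ (k : ℤ) (u : ↥g.domain), g (k • u) = (k : ℝ) * g u := by
    intro k u; rw [g.map_smul]; exact zsmul_eq_mul _ _
  -- cross inequality
  have G : ∀ (y z : X) (hy : y ∈ g.domain) (hz : z ∈ g.domain) (n m : ℤ), 0 < n → 0 < m →
      (n : ℝ) * g ⟨z, hz⟩ + (m : ℝ) * g ⟨y, hy⟩ ≤
        (n : ℝ) * f (z - m • x) + (m : ℝ) * f (y + n • x) := by
    intro y z hy hz n m hn hm
    have e1 : n • z + m • y = n • (z - m • x) + m • (y + n • x) := by
      rw [smul_sub, smul_add, smul_smul, smul_smul, mul_comm m n]; abel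
    have hmem : n • z + m • y ∈ g.domain := by
      exact add_mem (smul_mem _ _ hz) (smul_mem _ _ hy)
    have e2 : g ⟨n • z + m • y, hmem⟩ = (n : ℝ) * g ⟨z, hz⟩ + (m : ℝ) * g ⟨y, hy⟩ := by
      have : (⟨n • z + m • y, hmem⟩ : ↥g.domain) = n • ⟨z, hz⟩ + m • ⟨y, hy⟩ := by
        apply Subtype.ext; rfl
      rw [this, g.map_add, gsmul, gsmul]
    calc (n : ℝ) * g ⟨z, hz⟩ + (m : ℝ) * g ⟨y, hy⟩ = g ⟨n • z + m • y, hmem⟩ := e2.symm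
      _ ≤ f (n • z + m • y) := hgf _
      _ = f (n • (z - m • x) + m • (y + n • x)) := by rw [e1]
      _ ≤ f (n • (z - m • x)) + f (m • (y + n • x)) := hsub _ _
      _ = (n : ℝ) * f (z - m • x) + (m : ℝ) * f (y + n • x) := by
          rw [fz n hn.le, fz m hm.le]
  -- choose the extension constant c
  obtain ⟨c, hc1, hc2, hc3⟩ :
      ∃ c : ℝ,
        (∀ (y : X) (hy : y ∈ g.domain) (n : ℤ), 0 < n →
          g ⟨y, hy⟩ + (n : ℝ) * c ≤ f (y + n • x)) ∧
        (∀ (y : X) (hy : y ∈ g.domain) (m : ℤ), 0 < m →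
          g ⟨y, hy⟩ - (m : ℝ) * c ≤ f (y - m • x)) ∧
        (∀ (m : ℤ) (hm : m • x ∈ g.domain), g ⟨m • x, hm⟩ = (m : ℝ) * c) := by
    by_cases hB : ∃ m : ℤ, 0 < m ∧ m • x ∈ g.domain
    · -- some multiple of x already lies in the domain
      set K : Submodule ℤ ℤ := Submodule.comap (LinearMap.toSpanSingleton ℤ X x) g.domain with hK
      haveI : K.IsPrincipal := IsPrincipalIdealRing.principal K
      set a : ℤ := Submodule.IsPrincipal.generator K with ha
      have hmemK : ∀ m : ℤ, m ∈ K ↔ m • x ∈ g.domain := fun m => Iff.rfl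
      have haK : a • x ∈ g.domain := (hmemK a).1 (Submodule.IsPrincipal.generator_mem K)
      have ha0 : a ≠ 0 := by
        rintro h0
        obtain ⟨m, hm, hmd⟩ := hB
        obtain ⟨k, hk⟩ := (Submodule.IsPrincipal.mem_iff_eq_smul_generator K).1 ((hmemK m).2 hmd)
        rw [← ha, h0, smul_zero] at hk
        omega
      set c : ℝ := g ⟨a • x, haK⟩ / (a : ℝ)
      have hac : ((a : ℝ)) * c = g ⟨a • x, haK⟩ := by
        have ha0R : (a : ℝ) ≠ 0 := by exact_mod_cast ha0
        rw [show c = g ⟨a • x, haK⟩ / (a : ℝ) from rfl]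
        field_simp
      have hc3 : ∀ (m : ℤ) (hm : m • x ∈ g.domain), g ⟨m • x, hm⟩ = (m : ℝ) * c := by
        intro m hm
        obtain ⟨k, hk⟩ := (Submodule.IsPrincipal.mem_iff_eq_smul_generator K).1 ((hmemK m).2 hm)
        rw [← ha] at hk
        have : g ⟨m • x, hm⟩ = g (k • (⟨a • x, haK⟩ : ↥g.domain)) := by
          refine gval _ _ ?_
          rw [hk, smul_smul]
          rfl
        rw [this, gsmul, ← hac, hk]
        simp only [smul_eq_mul]; push_cast; ring
      -- positive member of K
      set m₀ : ℤ := |a| with hm₀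
      have hm₀pos : 0 < m₀ := abs_pos.2 ha0
      have hm₀K : m₀ • x ∈ g.domain := by
        rcases abs_choice a with h | h
        · rw [hm₀, h]; exact haK
        · rw [hm₀, h, neg_smul]; exact neg_mem haK
      have hgw : g ⟨m₀ • x, hm₀K⟩ = (m₀ : ℝ) * c := hc3 m₀ hm₀K
      refine ⟨c, ?_, ?_, hc3⟩
      · intro y hy n hn
        have hmem : m₀ • y + n • m₀ • x ∈ g.domain :=
          add_mem (smul_mem _ _ hy) (smul_mem _ _ hm₀K)
        have e1 : m₀ • (y + n • x) = m₀ • y + n • m₀ • x := by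
          rw [smul_add, smul_smul, smul_smul, mul_comm]
        have e2 : g ⟨m₀ • y + n • m₀ • x, hmem⟩
            = (m₀ : ℝ) * g ⟨y, hy⟩ + (n : ℝ) * ((m₀ : ℝ) * c) := by
          have : (⟨m₀ • y + n • m₀ • x, hmem⟩ : ↥g.domain)
              = m₀ • ⟨y, hy⟩ + n • ⟨m₀ • x, hm₀K⟩ := by apply Subtype.ext; rfl
          rw [this, g.map_add, gsmul, gsmul, hgw]
        have e3 : g ⟨m₀ • y + n • m₀ • x, hmem⟩ ≤ f (m₀ • (y + n • x)) := by
          have := hgf ⟨m₀ • y + n • m₀ • x, hmem⟩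
          simpa [← e1] using this
        rw [fz m₀ hm₀pos.le] at e3
        rw [e2] at e3
        have hm₀R : (0 : ℝ) < (m₀ : ℝ) := by exact_mod_cast hm₀pos
        nlinarith [e3]
      · intro y hy m hm
        have hmem : m₀ • y - m • m₀ • x ∈ g.domain :=
          sub_mem (smul_mem _ _ hy) (smul_mem _ _ hm₀K)
        have e1 : m₀ • (y - m • x) = m₀ • y - m • m₀ • x := by
          rw [smul_sub, smul_smul, smul_smul, mul_comm]
        have e2 : g ⟨m₀ • y - m • m₀ • x, hmem⟩
            = (m₀ : ℝ) * g ⟨y, hy⟩ - (m : ℝ) * ((m₀ : ℝ) * c) := by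
          have : (⟨m₀ • y - m • m₀ • x, hmem⟩ : ↥g.domain)
              = m₀ • ⟨y, hy⟩ - m • ⟨m₀ • x, hm₀K⟩ := by apply Subtype.ext; rfl
          rw [this, g.map_sub, gsmul, gsmul, hgw]
        have e3 : g ⟨m₀ • y - m • m₀ • x, hmem⟩ ≤ f (m₀ • (y - m • x)) := by
          have := hgf ⟨m₀ • y - m • m₀ • x, hmem⟩
          simpa [← e1] using this
        rw [fz m₀ hm₀pos.le] at e3
        rw [e2] at e3
        have hm₀R : (0 : ℝ) < (m₀ : ℝ) := by exact_mod_cast hm₀pos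
        nlinarith [e3]
    · -- no nonzero multiple of x is in the domain
      push_neg at hB
      have hnomul : ∀ m : ℤ, m • x ∈ g.domain → m = 0 := by
        intro m hm
        by_contra hm0
        rcases lt_or_gt_of_ne hm0 with h | h
        · exact absurd (hB (-m) (by omega)) (by simp [neg_smul, neg_mem hm, not_not])
        · exact absurd (hB m h) (not_not_intro hm)
      set S : Set ℝ :=
        {r : ℝ | ∃ z : X, ∃ hz : z ∈ g.domain, ∃ m : ℤ, 0 < m ∧
          r = (g ⟨z, hz⟩ - f (z - m • x)) / (m : ℝ)} with hS
      have hSne : S.Nonempty := by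
        refine ⟨(g ⟨0, zero_mem _⟩ - f (0 - (1:ℤ) • x)) / ((1:ℤ) : ℝ), 0, zero_mem _, 1,
          one_pos, rfl⟩
      have hub : ∀ (y : X) (hy : y ∈ g.domain) (n : ℤ), 0 < n →
          ∀ r ∈ S, r ≤ (f (y + n • x) - g ⟨y, hy⟩) / (n : ℝ) := by
        rintro y hy n hn r ⟨z, hz, m, hm, rfl⟩
        have hmR : (0 : ℝ) < (m : ℝ) := by exact_mod_cast hm
        have hnR : (0 : ℝ) < (n : ℝ) := by exact_mod_cast hn
        rw [div_le_div_iff₀ hmR hnR]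
        have := G y z hy hz n m hn hm
        nlinarith [this]
      have hbdd : BddAbove S := by
        refine ⟨(f (0 + (1:ℤ) • x) - g ⟨0, zero_mem _⟩) / ((1:ℤ) : ℝ), ?_⟩
        intro r hr
        exact hub 0 (zero_mem _) 1 one_pos r hr
      set c : ℝ := sSup S
      refine ⟨c, ?_, ?_, ?_⟩
      · intro y hy n hn
        have hnR : (0 : ℝ) < (n : ℝ) := by exact_mod_cast hn
        have : c ≤ (f (y + n • x) - g ⟨y, hy⟩) / (n : ℝ) :=
          csSup_le hSne (hub y hy n hn)
        rw [le_div_iff₀ hnR] at this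
        nlinarith [this]
      · intro y hy m hm
        have hmR : (0 : ℝ) < (m : ℝ) := by exact_mod_cast hm
        have hmem : (g ⟨y, hy⟩ - f (y - m • x)) / (m : ℝ) ∈ S := ⟨y, hy, m, hm, rfl⟩
        have : (g ⟨y, hy⟩ - f (y - m • x)) / (m : ℝ) ≤ c := le_csSup hbdd hmem
        rw [div_le_iff₀ hmR] at this
        nlinarith [this]
      · intro m hm
        have := hnomul m hm
        subst this
        have : g ⟨(0:ℤ) • x, hm⟩ = g 0 := by
          refine gval _ _ ?_; simp
        rw [this, g.map_zero]
        simp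
  -- domination for all integers
  have hdom : ∀ (y : X) (hy : y ∈ g.domain) (n : ℤ),
      g ⟨y, hy⟩ + (n : ℝ) * c ≤ f (y + n • x) := by
    intro y hy n
    rcases lt_trichotomy n 0 with h | h | h
    · have := hc2 y hy (-n) (by omega)
      push_cast at this
      simpa [sub_eq_add_neg, neg_smul] using this
    · subst h; simpa using hgf ⟨y, hy⟩
    · exact hc1 y hy n h
  -- well-definedness
  have W : ∀ (y : X) (hy : y ∈ g.domain) (n : ℤ), y + n • x = 0 →
      g ⟨y, hy⟩ + (n : ℝ) * c = 0 := by
    intro y hy n he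
    have hy' : y = (-n) • x := by
      rw [neg_smul]; exact eq_neg_of_add_eq_zero_left he
    have hmem : (-n) • x ∈ g.domain := hy' ▸ hy
    have : g ⟨y, hy⟩ = g ⟨(-n) • x, hmem⟩ := gval _ _ hy'
    rw [this, hc3 (-n) hmem]
    push_cast; ring
  have indep : ∀ (y₁ : X) (hy₁ : y₁ ∈ g.domain) (n₁ : ℤ)
      (y₂ : X) (hy₂ : y₂ ∈ g.domain) (n₂ : ℤ),
      y₁ + n₁ • x = y₂ + n₂ • x →
      g ⟨y₁, hy₁⟩ + (n₁ : ℝ) * c = g ⟨y₂, hy₂⟩ + (n₂ : ℝ) * c := by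
    intro y₁ hy₁ n₁ y₂ hy₂ n₂ he
    have hzero : (y₁ - y₂) + (n₁ - n₂) • x = 0 := by
      rw [sub_smul]
      have : y₁ + n₁ • x - (y₂ + n₂ • x) = 0 := by rw [he]; abel
      rw [← this]; abel
    have hsubmem : y₁ - y₂ ∈ g.domain := sub_mem hy₁ hy₂
    have := W (y₁ - y₂) hsubmem (n₁ - n₂) hzero
    have hgs : g ⟨y₁ - y₂, hsubmem⟩ = g ⟨y₁, hy₁⟩ - g ⟨y₂, hy₂⟩ := by
      have : (⟨y₁ - y₂, hsubmem⟩ : ↥g.domain) = ⟨y₁, hy₁⟩ - ⟨y₂, hy₂⟩ := by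
        apply Subtype.ext; rfl
      rw [this, g.map_sub]
    rw [hgs] at this
    push_cast at this
    linarith
  -- the extended domain
  set D : Submodule ℤ X := g.domain ⊔ Submodule.span ℤ {x} with hD
  have memD : ∀ z : ↥D, ∃ p : X × ℤ, ∃ hy : p.1 ∈ g.domain, (z : X) = p.1 + p.2 • x := by
    rintro ⟨z, hz⟩
    rcases Submodule.mem_sup.mp hz with ⟨y, hy, w, hw, hsum⟩
    rcases Submodule.mem_span_singleton.mp hw with ⟨n, hn⟩
    exact ⟨(y, n), hy, by rw [hn]; exact hsum.symm⟩
  choose rep hrepmem hrepeq using memD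
  set val : ↥D → ℝ := fun z => g ⟨(rep z).1, hrepmem z⟩ + (((rep z).2 : ℤ) : ℝ) * c with hval
  have valspec : ∀ (z : ↥D) (y : X) (hy : y ∈ g.domain) (n : ℤ), (z : X) = y + n • x →
      val z = g ⟨y, hy⟩ + (n : ℝ) * c := by
    intro z y hy n he
    exact indep _ (hrepmem z) _ y hy n ((hrepeq z).symm.trans he)
  have madd : ∀ z₁ z₂ : ↥D, val (z₁ + z₂) = val z₁ + val z₂ := by
    intro z₁ z₂
    · rw [valspec (z₁ + z₂) ((rep z₁).1 + (rep z₂).1)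
        (add_mem (hrepmem z₁) (hrepmem z₂)) ((rep z₁).2 + (rep z₂).2) ?_]
      · have h1 := hrepeq z₁
        have h2 := hrepeq z₂
        have hg : g ⟨(rep z₁).1 + (rep z₂).1, add_mem (hrepmem z₁) (hrepmem z₂)⟩
            = g ⟨(rep z₁).1, hrepmem z₁⟩ + g ⟨(rep z₂).1, hrepmem z₂⟩ := by
          have : (⟨(rep z₁).1 + (rep z₂).1, add_mem (hrepmem z₁) (hrepmem z₂)⟩ : ↥g.domain)
              = ⟨(rep z₁).1, hrepmem z₁⟩ + ⟨(rep z₂).1, hrepmem z₂⟩ := by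
            apply Subtype.ext; rfl
          rw [this, g.map_add]
        simp only [hval]
        rw [hg]; push_cast; ring
      · show ((z₁ : X) + (z₂ : X)) = _
        rw [hrepeq z₁, hrepeq z₂, add_smul]; abel
  have msmul : ∀ (k : ℤ) (z : ↥D), val (k • z) = k • val z := by
      intro k z
      rw [valspec (k • z) (k • (rep z).1) (smul_mem _ _ (hrepmem z)) (k * (rep z).2) ?_]
      · have hg : g ⟨k • (rep z).1, smul_mem _ _ (hrepmem z)⟩
            = (k : ℝ) * g ⟨(rep z).1, hrepmem z⟩ := by
          have : (⟨k • (rep z).1, smul_mem _ _ (hrepmem z)⟩ : ↥g.domain)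
              = k • ⟨(rep z).1, hrepmem z⟩ := by apply Subtype.ext; rfl
          rw [this, gsmul]
        rw [hg]
        rw [zsmul_eq_mul]
        simp only [hval]
        push_cast; ring
      · show (k • (z : X)) = _
        rw [hrepeq z, smul_add, smul_smul]
  refine ⟨⟨D, ⟨⟨val, fun a b => madd a b⟩, fun k z => by simpa using msmul k z⟩⟩, ⟨le_sup_left, ?_⟩, ?_, ?_⟩
  · rintro u v huv
    show g u = val v
    rw [valspec v u u.2 0 (by rw [zero_smul, add_zero, ← huv])]
    simp
  · exact Submodule.mem_sup_right (Submodule.mem_span_singleton_self x)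
  · intro z
    show val z ≤ f z
    rw [valspec z (rep z).1 (hrepmem z) (rep z).2 (hrepeq z), hrepeq z]
    exact hdom _ _ _

/-- Hahn–Banach theorem for groups: an additive real-valued function on a subgroup dominated by
an ℕ-sublinear function `f` extends to an additive function on the whole group dominated
by `f`. -/
theorem hahn_banach_groups {X : Type*} [AddCommGroup X] (X' : AddSubgroup X)
    (f : X → ℝ)
    (hsub : ∀ x y, f (x + y) ≤ f x + f y)
    (hhom : ∀ (m : ℕ) (x : X), f (m • x) = (m : ℝ) * f x)
    (h : X' → ℝ) (hadd : ∀ a b : X', h (a + b) = h a + h b)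
    (hle : ∀ a : X', h a ≤ f (a : X)) :
    ∃ hbar : X → ℝ, (∀ x y, hbar (x + y) = hbar x + hbar y) ∧
      (∀ a : X', hbar (a : X) = h a) ∧ ∀ x, hbar x ≤ f x := by
  classical
  set hm : X' →+ ℝ := AddMonoidHom.mk' h hadd with hhm
  set hm2 : (AddSubgroup.toIntSubmodule X') →+ ℝ :=
    AddMonoidHom.mk' (fun a => h ⟨a.1, a.2⟩) (fun a b => hadd ⟨a.1, a.2⟩ ⟨b.1, b.2⟩) with hhm2
  set h₀ : X →ₗ.[ℤ] ℝ := ⟨AddSubgroup.toIntSubmodule X', hm2.toIntLinearMap⟩ with hh₀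
  set s : Set (X →ₗ.[ℤ] ℝ) := {g | h₀ ≤ g ∧ ∀ z : g.domain, g z ≤ f z} with hs
  have h₀s : h₀ ∈ s := by
    refine ⟨le_refl _, ?_⟩
    intro z
    exact hle ⟨z.1, z.2⟩
  have hchainub : ∀ c ⊆ s, IsChain (· ≤ ·) c → ∀ y ∈ c, ∃ ub ∈ s, ∀ z ∈ c, z ≤ ub := by
    intro c hcs hchain y hyc
    have hdir : DirectedOn (· ≤ ·) c := hchain.directedOn
    refine ⟨LinearPMap.sSup c hdir, ⟨?_, ?_⟩, fun z hz => LinearPMap.le_sSup hdir hz⟩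
    · exact le_trans (hcs hyc).1 (LinearPMap.le_sSup hdir hyc)
    · intro z
      have hz : (z : X) ∈ sSup (LinearPMap.domain '' c) := z.2
      have hdir' : DirectedOn (· ≤ ·) (LinearPMap.domain '' c) :=
        directedOn_image.2 (hdir.mono @(LinearPMap.domain_mono.monotone))
      obtain ⟨p, hp, hzp⟩ := (Submodule.mem_sSup_of_directed (Set.Nonempty.image _ ⟨y, hyc⟩) hdir').1 hz
      obtain ⟨l, hlc, rfl⟩ := hp
      have hval : l ⟨(z : X), hzp⟩ = (LinearPMap.sSup c hdir) z :=
        (LinearPMap.le_sSup hdir hlc).2 rfl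
      rw [← hval]
      exact (hcs hlc).2 ⟨(z : X), hzp⟩
  obtain ⟨m, hm0, hmmem, hmmax⟩ := zorn_le_nonempty₀ s hchainub h₀ h₀s
  have hdomtop : m.domain = ⊤ := by
    by_contra hne
    obtain ⟨x, hx⟩ : ∃ x : X, x ∉ m.domain := by
      by_contra hall
      push_neg at hall
      exact hne (Submodule.eq_top_iff'.mpr hall)
    obtain ⟨g', hle', hxg', hg'f⟩ := hb_step f hsub hhom m hmmem.2 x hx
    have hg's : g' ∈ s := ⟨le_trans hmmem.1 hle', hg'f⟩
    have := hmmax hg's hle'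
    exact hx (this.1 hxg')
  have memall : ∀ z : X, z ∈ m.domain := Submodule.eq_top_iff'.mp hdomtop
  refine ⟨fun z => m ⟨z, memall z⟩, ?_, ?_, ?_⟩
  · intro u v
    show (m ⟨u + v, memall _⟩ : ℝ) = m ⟨u, memall u⟩ + m ⟨v, memall v⟩
    have : (⟨u + v, memall _⟩ : ↥m.domain) = ⟨u, memall u⟩ + ⟨v, memall v⟩ := by
      apply Subtype.ext; rfl
    rw [this, m.map_add]
  · intro a
    show (m ⟨(a : X), memall _⟩ : ℝ) = h a
    have := hmmem.1.2 (x := ⟨(a : X), a.2⟩) (y := ⟨(a : X), memall _⟩) rfl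
    rw [← this]
    show h ⟨(a : X), a.2⟩ = h a
    congr
  · intro z
    exact hmmem.2 ⟨z, memall z⟩
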